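/- Let C be a pointed category with finite limits and cokernels, and E a pullback-stable class of morphisms containing all isomorphisms that satisfies the E-short five lemma. Then the relative Hofmann axiom holds: if in a commutative square w f' = v f with f, f' ∈ E, w a monomorphism, v a normal monomorphism, and ker(f') factoring through w, then w is a normal monomorphism. -/

import Mathlib

open CategoryTheory CategoryTheory.Limits ZeroObject

universe v u v' u'

namespace RelHom

variable {C : Type u} [Category.{v} C]

/-- `E` is stable under pullback. -/
def PullbackStable (E : MorphismProperty C) : Prop :=
  ∀ ⦃P X Y Z : C⦄ (fst : P ⟶ X) (snd : P ⟶ Y) (f : X ⟶ Z) (g : Y ⟶ Z),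
    IsPullback fst snd f g → E g → E fst

/-- `E` contains all isomorphisms. -/
def ContainsIsos (E : MorphismProperty C) : Prop :=
  ∀ ⦃X Y : C⦄ (f : X ⟶ Y), IsIso f → E f

/-- `E` is closed under composition. -/
def CompClosed (E : MorphismProperty C) : Prop :=
  ∀ ⦃X Y Z : C⦄ (f : X ⟶ Y) (g : Y ⟶ Z), E f → E g → E (f ≫ g)

/-- If `f ∈ E` and `f ≫ g ∈ E` then `g ∈ E`. -/
def RightCancel (E : MorphismProperty C) : Prop :=
  ∀ ⦃X Y Z : C⦄ (f : X ⟶ Y) (g : Y ⟶ Z), E f → E (f ≫ g) → E g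

variable [HasZeroMorphisms C]

/-- The `E`-short five lemma. -/
def ShortFive (E : MorphismProperty C) : Prop :=
  ∀ ⦃K A A' B : C⦄ (k : K ⟶ A) (k' : K ⟶ A') (f : A ⟶ B) (f' : A' ⟶ B) (w : A ⟶ A')
    (hk : k ≫ f = 0) (hk' : k' ≫ f' = 0),
    IsLimit (KernelFork.ofι k hk) → IsLimit (KernelFork.ofι k' hk') →
    E f → E f' → w ≫ f' = f → k ≫ w = k' → IsIso w

/-- Every morphism in `E` is a normal epimorphism. -/
def AllNormalEpi (E : MorphismProperty C) : Prop :=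
  ∀ ⦃X Y : C⦄ (f : X ⟶ Y), E f → Nonempty (NormalEpi f)

/-- Condition (f): (mono)∘(E) composites admit (E, mono)-factorizations. -/
def MonoFactor (E : MorphismProperty C) : Prop :=
  ∀ ⦃X Y Z : C⦄ (e : X ⟶ Y) (m : Y ⟶ Z), E e → Mono m →
    ∃ (W : C) (e' : X ⟶ W) (m' : W ⟶ Z), E e' ∧ Mono m' ∧ e' ≫ m' = e ≫ m

/-- Condition (g): the kernel-ladder condition. -/
def KernelLadder (E : MorphismProperty C) : Prop :=
  ∀ ⦃K K' A A' B : C⦄ (k : K ⟶ A) (k' : K' ⟶ A') (f : A ⟶ B) (f' : A' ⟶ B)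
    (u : K ⟶ K') (w : A ⟶ A') (hk : k ≫ f = 0) (hk' : k' ≫ f' = 0),
    IsLimit (KernelFork.ofι k hk) → IsLimit (KernelFork.ofι k' hk') →
    E f → E f' → E u → w ≫ f' = f → k ≫ w = u ≫ k' → E w

/-- `(C, E)` is a relative weakly homological category: conditions (a)–(e). -/
structure WeaklyHomological (E : MorphismProperty C) : Prop where
  contains_isos : ContainsIsos E
  stable : PullbackStable E
  normal_epi : AllNormalEpi E
  short_five : ShortFive E
  comp_closed : CompClosed E
  right_cancel : RightCancel E

/-- `(C, E)` is a relative homological category: conditions (a)–(g). -/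
structure Homological (E : MorphismProperty C) extends WeaklyHomological E : Prop where
  mono_factor : MonoFactor E
  ladder : KernelLadder E

/-- A composable pair is `E`-exact at the middle object if the incoming morphism
factors as a morphism in `E` followed by the kernel of the outgoing morphism. -/
def EExactAt (E : MorphismProperty C) ⦃X Y Z : C⦄ (f : X ⟶ Y) (g : Y ⟶ Z) : Prop :=
  ∃ (W : C) (e : X ⟶ W) (m : W ⟶ Y) (hm : m ≫ g = 0),
    E e ∧ Nonempty (IsLimit (KernelFork.ofι m hm)) ∧ e ≫ m = f

/-- `0 ⟶ X ⟶ Y ⟶ Z ⟶ 0` is an `E`-exact (short exact) sequence: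
`f` is the kernel of `g` and `g ∈ E`. -/
def ShortEExact (E : MorphismProperty C) ⦃X Y Z : C⦄ (f : X ⟶ Y) (g : Y ⟶ Z)
    (h : f ≫ g = 0) : Prop :=
  Nonempty (IsLimit (KernelFork.ofι f h)) ∧ E g

/-- The class of split epimorphisms. -/
def SplitEpis : MorphismProperty C := fun _ _ f => IsSplitEpi f

/-- The class of regular epimorphisms. -/
def RegEpis : MorphismProperty C := fun _ _ f => Nonempty (RegularEpi f)

theorem statement2 [HasZeroObject C] [HasFiniteLimits C] [HasCokernels C]
    (E : MorphismProperty C) (hiso : ContainsIsos E) (hstb : PullbackStable E)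
    (h5 : ShortFive E) {A B A' B' : C} (f : A ⟶ B) (f' : A' ⟶ B')
    (w : A ⟶ A') (v : B ⟶ B') (hsq : w ≫ f' = f ≫ v)
    (hf : E f) (hf' : E f') (hw : Mono w) (hv : Nonempty (NormalMono v))
    (hle : ∃ t : kernel f' ⟶ A, t ≫ w = kernel.ι f') :
    Nonempty (NormalMono w) := by
  obtain ⟨nv⟩ := hv
  obtain ⟨t, ht⟩ := hle
  haveI : Mono v := mono_of_isLimit_fork nv.isLimit
  let p1 : pullback v f' ⟶ B := pullback.fst v f'
  let p2 : pullback v f' ⟶ A' := pullback.snd v f'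
  have hcond : p1 ≫ v = p2 ≫ f' := pullback.condition
  haveI hp2mono : Mono p2 := pullback.snd_of_mono
  have hp1E : E p1 := hstb _ _ _ _ (IsPullback.of_hasPullback v f') hf'
  let u : A ⟶ pullback v f' := pullback.lift f w hsq.symm
  have hup1 : u ≫ p1 = f := pullback.lift_fst _ _ _
  have hup2 : u ≫ p2 = w := pullback.lift_snd _ _ _
  let j : kernel f' ⟶ pullback v f' := pullback.lift 0 (kernel.ι f') (by simp)
  have hjp1 : j ≫ p1 = 0 := pullback.lift_fst _ _ _
  have hjp2 : j ≫ p2 = kernel.ι f' := pullback.lift_snd _ _ _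
  haveI htmono : Mono t := by
    have : Mono (t ≫ w) := by rw [ht]; infer_instance
    exact mono_of_mono t w
  haveI hjmono : Mono j := by
    have : Mono (j ≫ p2) := by rw [hjp2]; infer_instance
    exact mono_of_mono j p2
  have htf : t ≫ f = 0 := by
    rw [← cancel_mono v, Category.assoc, ← hsq, zero_comp, ← Category.assoc, ht,
      kernel.condition]
  -- t is a kernel of f
  have tlim : IsLimit (KernelFork.ofι t htf) :=
    KernelFork.IsLimit.ofι' t htf (fun {X} x hx => by
      have hxw : (x ≫ w) ≫ f' = 0 := by
        rw [Category.assoc, hsq, ← Category.assoc, hx, zero_comp]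
      refine ⟨kernel.lift f' (x ≫ w) hxw, ?_⟩
      rw [← cancel_mono w, Category.assoc, ht, kernel.lift_ι])
  -- j is a kernel of p1
  have jlim : IsLimit (KernelFork.ofι j hjp1) :=
    KernelFork.IsLimit.ofι' j hjp1 (fun {X} x hx => by
      have hxp : (x ≫ p2) ≫ f' = 0 := by
        rw [Category.assoc, ← hcond, ← Category.assoc, hx, zero_comp]
      refine ⟨kernel.lift f' (x ≫ p2) hxp, ?_⟩
      rw [← cancel_mono p2, Category.assoc, hjp2, kernel.lift_ι])
  have htu : t ≫ u = j := by
    rw [← cancel_mono p2, Category.assoc, hup2, ht, hjp2]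
  haveI hiu : IsIso u := h5 t j f p1 u htf hjp1 tlim jlim hf hp1E hup1 htu
  have hw0 : w ≫ f' ≫ nv.g = 0 := by
    rw [← Category.assoc, hsq, Category.assoc, nv.w, comp_zero]
  refine ⟨⟨nv.Z, f' ≫ nv.g, hw0, ?_⟩⟩
  exact KernelFork.IsLimit.ofι' w hw0 (fun {X} x hx => by
    have hx' : (x ≫ f') ≫ nv.g = 0 := by rw [Category.assoc]; exact hx
    obtain ⟨l, hl⟩ := KernelFork.IsLimit.lift' nv.isLimit (x ≫ f') hx'
    refine ⟨(pullback.lift l x hl : X ⟶ pullback v f') ≫ inv u, ?_⟩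
    rw [← hup2, Category.assoc, ← Category.assoc (inv u), IsIso.inv_hom_id, Category.id_comp]
    exact pullback.lift_snd _ _ _)

end RelHom
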